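/- Let (w_j)_{j≥1} be a sequence in ℤ^d and (H_j)_{j≥1} a sequence of tuples of d vectors each (norm-bounded). Define the interleaved 2d-dimensional sequence x_j = e_{H_j,H_{j+1}} ⧢ (w_j · H_j), where e_{H,H'}(i) ∈ {0,1} flags whether the i-th components of H and H' differ, and (a ⧢ b)(2i−1) = a(i), (a ⧢ b)(2i) = b(i). Then the lexicographic energy winning condition holds for (x_j) (i.e., there is k ≤ 2d with limsup_n Σ_{j≤n} x_j(k) = −∞ and liminf_n Σ_{j≤n} x_j(ℓ) < +∞ for ℓ < k) if and only if there exist k̂ ≤ d, an index i, and vectors g_1, …, g_{k̂} such that (g_1,...,g_{k̂}) is a prefix of H_j for all j ≥ i, limsup_n Σ_{j≤n} w_j · g_{k̂} = −∞, and liminf_n Σ_{j≤n} w_j · g_ℓ < +∞ for all ℓ < k̂. -/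

import Mathlib

open Matrix Filter

lemma tailzero (f : ℕ → ℤ) {i n : ℕ} (hn : i ≤ n) (h : ∀ j, i ≤ j → f j = 0) :
    ∑ j ∈ Finset.range n, f j = ∑ j ∈ Finset.range i, f j := by
  rw [Finset.range_eq_Ico, ← Finset.sum_Ico_consecutive _ (Nat.zero_le i) hn,
    Finset.sum_eq_zero (fun j hj => h j (Finset.mem_Ico.mp hj).1), add_zero, ← Finset.range_eq_Ico]

lemma sum_shift {f g : ℕ → ℤ} {i : ℕ} (h : ∀ j, i ≤ j → f j = g j) :
    ∀ n, i ≤ n → ∑ j ∈ Finset.range n, g j =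
      ∑ j ∈ Finset.range n, f j + ∑ j ∈ Finset.range i, (g j - f j) := by
  intro n hn
  have := tailzero (fun j => g j - f j) hn (fun j hj => by simp [h j hj])
  simp only [Finset.sum_sub_distrib] at this ⊢
  omega

lemma tendsto_transfer {f g : ℕ → ℤ} {i : ℕ} (h : ∀ j, i ≤ j → f j = g j)
    (hf : Tendsto (fun n => ∑ j ∈ Finset.range n, f j) atTop atBot) :
    Tendsto (fun n => ∑ j ∈ Finset.range n, g j) atTop atBot := by
  apply Tendsto.congr' (f₁ := fun n => ∑ j ∈ Finset.range n, f j + ∑ j ∈ Finset.range i, (g j - f j))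
  · filter_upwards [eventually_ge_atTop i] with n hn
    exact (sum_shift h n hn).symm
  · exact tendsto_atBot_add_const_right _ _ hf

lemma freq_transfer {f g : ℕ → ℤ} {i : ℕ} (h : ∀ j, i ≤ j → f j = g j)
    (hf : ∃ c, ∃ᶠ n in atTop, ∑ j ∈ Finset.range n, f j ≤ c) :
    ∃ c, ∃ᶠ n in atTop, ∑ j ∈ Finset.range n, g j ≤ c := by
  obtain ⟨c, hc⟩ := hf
  refine ⟨c + ∑ j ∈ Finset.range i, (g j - f j), ?_⟩
  refine (hc.and_eventually (eventually_ge_atTop i)).mono ?_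
  rintro n ⟨hle, hn⟩
  rw [sum_shift h n hn]
  omega

lemma flags_stab {f : ℕ → ℤ} (h01 : ∀ j, f j = 0 ∨ f j = 1)
    (hc : ∃ c, ∃ᶠ n in atTop, ∑ j ∈ Finset.range n, f j ≤ c) :
    ∃ i, ∀ j, i ≤ j → f j = 0 := by
  obtain ⟨c, hc⟩ := hc
  set S : ℕ → ℤ := fun n => ∑ j ∈ Finset.range n, f j with hS
  have hmono : Monotone S := by
    intro a b hab
    exact Finset.sum_le_sum_of_subset_of_nonneg (Finset.range_subset_range.mpr hab)
      (fun j _ _ => by rcases h01 j with h | h <;> omega)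
  have hbd : ∀ n, S n ≤ c := by
    intro n
    obtain ⟨m, hm, hnm⟩ := (hc.and_eventually (eventually_ge_atTop n)).exists
    exact le_trans (hmono hnm) hm
  obtain ⟨ub, ⟨n0, hn0⟩, hub⟩ := Int.exists_greatest_of_bdd
    (P := fun z => ∃ n, S n = z)
    ⟨c, fun z hz => by obtain ⟨n, hn⟩ := hz; exact hn ▸ hbd n⟩ ⟨S 0, 0, rfl⟩
  refine ⟨n0, fun j hj => ?_⟩
  have h1 : S j = ub := le_antisymm (hub _ ⟨j, rfl⟩) (hn0 ▸ hmono hj)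
  have h2 : S (j + 1) = ub := le_antisymm (hub _ ⟨j + 1, rfl⟩) (hn0 ▸ hmono (by omega))
  have h3 : S (j + 1) = S j + f j := Finset.sum_range_succ f j
  omega

lemma stab_const {α : Type*} {a : ℕ → α} {i : ℕ} (h : ∀ j, i ≤ j → a j = a (j + 1)) :
    ∀ j, i ≤ j → a j = a i := by
  intro j hj
  induction j with
  | zero => have : i = 0 := by omega
            rw [this]
  | succ n ih =>
    rcases Nat.lt_or_ge i (n + 1) with hlt | hge
    · rw [← h n (by omega)]; exact ih (by omega)
    · have : i = n + 1 := by omega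
      rw [this]


/-- Correctness of the translation from perfect half space games to lexicographic
energy games, at the level of plays: the lexicographic energy winning condition for
the interleaved `2d`-dimensional sequence of flag vectors and normalised weights
holds iff the perfect half space winning condition holds for the original sequence. -/
theorem stmt16 (d : ℕ) (hd : 0 < d) (w : ℕ → Fin d → ℤ)
    (H : ℕ → Fin d → Fin d → ℤ) (Cb : ℤ) (hHb : ∀ j i l, |H j i l| ≤ Cb) :
    let x : ℕ → Fin (2 * d) → ℤ := fun j i =>
      if i.val % 2 = 0 then
        (if H j ⟨i.val / 2, by have := i.isLt; omega⟩
            = H (j + 1) ⟨i.val / 2, by have := i.isLt; omega⟩ then 0 else 1)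
      else w j ⬝ᵥ H j ⟨i.val / 2, by have := i.isLt; omega⟩
    ((∃ k : Fin (2 * d),
        Tendsto (fun n => ∑ j ∈ Finset.range n, x j k) atTop atBot ∧
        ∀ l : Fin (2 * d), l < k →
          ∃ c : ℤ, ∃ᶠ n in atTop, (∑ j ∈ Finset.range n, x j l) ≤ c) ↔
      (∃ kh : ℕ, 0 < kh ∧ kh ≤ d ∧ ∃ i : ℕ, ∃ g : ℕ → Fin d → ℤ,
        (∀ j ≥ i, ∀ l : Fin d, l.val < kh → H j l = g l.val) ∧
        Tendsto (fun n => ∑ j ∈ Finset.range n, w j ⬝ᵥ g (kh - 1)) atTop atBot ∧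
        ∀ l : ℕ, l < kh - 1 →
          ∃ c : ℤ, ∃ᶠ n in atTop, (∑ j ∈ Finset.range n, w j ⬝ᵥ g l) ≤ c)) := by
  intro x
  constructor
  · rintro ⟨k, hk, hl⟩
    -- k must be odd
    have hodd : k.val % 2 = 1 := by
      by_contra hpar
      have hpar' : k.val % 2 = 0 := by omega
      obtain ⟨n, hn⟩ := (hk.eventually (eventually_le_atBot (-1))).exists
      have hnn : (0:ℤ) ≤ ∑ j ∈ Finset.range n, x j k := by
        refine Finset.sum_nonneg (fun j _ => ?_)
        simp only [x]
        rw [if_pos hpar']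
        split <;> norm_num
      omega
    set m := k.val / 2 with hm
    have hmd : m < d := by have := k.isLt; omega
    have hkval : k.val = 2 * m + 1 := by omega
    -- stabilization for each coordinate l' with l'.val < m + 1
    have hstab : ∀ l' : Fin d, ∃ i0 : ℕ, l'.val < m + 1 →
        ∀ j, i0 ≤ j → H j l' = H (j + 1) l' := by
      intro l'
      by_cases hl' : l'.val < m + 1
      · have hlt : 2 * l'.val < 2 * d := by omega
        have hlk : (⟨2 * l'.val, hlt⟩ : Fin (2 * d)) < k := by
          rw [Fin.lt_def]; simp; omega
        obtain ⟨i0, hi0⟩ := flags_stab (f := fun j => x j ⟨2 * l'.val, hlt⟩)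
          (fun j => by simp only [x]; rw [if_pos (by simp)]; split <;> simp)
          (hl _ hlk)
        refine ⟨i0, fun _ j hj => ?_⟩
        have h0 := hi0 j hj
        simp only [x] at h0
        rw [if_pos (by simp)] at h0
        have he : (⟨2 * l'.val / 2, by omega⟩ : Fin d) = l' := by
          apply Fin.ext; simp [Nat.mul_div_cancel_left]
        rw [he] at h0
        split at h0
        · assumption
        · omega
      · exact ⟨0, fun h => absurd h hl'⟩
    choose iF hiF using hstab
    set i := Finset.univ.sup iF with hi
    have hconst : ∀ l' : Fin d, l'.val < m + 1 → ∀ j, i ≤ j → H j l' = H i l' := by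
      intro l' hl' j hj
      exact stab_const (a := fun j => H j l')
        (fun j hj => hiF l' hl' j (le_trans (Finset.le_sup (Finset.mem_univ l')) hj)) j hj
    set g : ℕ → Fin d → ℤ := fun l => if h : l < d then H i ⟨l, h⟩ else 0 with hgdef
    refine ⟨m + 1, by omega, by omega, i, g, ?_, ?_, ?_⟩
    · intro j hj l hlm
      have : g l.val = H i l := by
        simp only [g]; rw [dif_pos l.isLt]
      rw [this]
      exact hconst l hlm j hj
    · simp only [Nat.add_sub_cancel]
      have hgm : g m = H i ⟨m, hmd⟩ := by simp only [g]; rw [dif_pos hmd]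
      refine tendsto_transfer (f := fun j => x j k) (i := i) ?_ hk
      intro j hj
      simp only [x]
      rw [if_neg (by omega), hgm]
      congr 1
      exact hconst ⟨m, hmd⟩ (by simp) j hj
    · intro l hlm
      simp only [Nat.add_sub_cancel] at hlm
      have hld : l < d := by omega
      have hlt : 2 * l + 1 < 2 * d := by omega
      have hlk : (⟨2 * l + 1, hlt⟩ : Fin (2 * d)) < k := by
        rw [Fin.lt_def]; simp; omega
      refine freq_transfer (f := fun j => x j ⟨2 * l + 1, hlt⟩) (i := i) ?_ (hl _ hlk)
      intro j hj
      simp only [x]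
      rw [if_neg (by omega)]
      have he : ((2 * l + 1) / 2) = l := by omega
      have hfm : (⟨(2 * l + 1) / 2, by omega⟩ : Fin d) = ⟨l, hld⟩ := Fin.ext (by simp [he])
      rw [hfm, hconst ⟨l, hld⟩ (by simp; omega) j hj]
      congr 1
      simp only [g]
      rw [dif_pos hld]
  · rintro ⟨kh, hkh0, hkhd, i, g, hg, htend, hfreq⟩
    have hkd : 2 * (kh - 1) + 1 < 2 * d := by omega
    refine ⟨⟨2 * (kh - 1) + 1, hkd⟩, ?_, ?_⟩
    · refine tendsto_transfer (f := fun j => w j ⬝ᵥ g (kh - 1)) (i := i) ?_ htend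
      intro j hj
      simp only [x]
      rw [if_neg (by omega)]
      have he : ((2 * (kh - 1) + 1) / 2) = kh - 1 := by omega
      have hk1d : kh - 1 < d := by omega
      have hfm : (⟨(2 * (kh - 1) + 1) / 2, by omega⟩ : Fin d) = ⟨kh - 1, hk1d⟩ :=
        Fin.ext (by simp [he])
      rw [hfm, hg j hj ⟨kh - 1, hk1d⟩ (by simp; omega)]
    · intro l hlk
      rw [Fin.lt_def] at hlk
      simp only at hlk
      rcases Nat.even_or_odd l.val with hev | hod
      · -- even coordinate: flag is eventually 0
        have hld : l.val / 2 < d := by have := l.isLt; omega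
        have hle : l.val / 2 < kh := by
          obtain ⟨r, hr⟩ := hev; omega
        refine ⟨∑ j ∈ Finset.range i, x j l, ?_⟩
        have hz : ∀ j, i ≤ j → x j l = 0 := by
          intro j hj
          simp only [x]
          rw [if_pos (by obtain ⟨r, hr⟩ := hev; omega)]
          rw [if_pos]
          rw [hg j hj ⟨l.val / 2, hld⟩ hle, hg (j + 1) (by omega) ⟨l.val / 2, hld⟩ hle]
        exact ((eventually_ge_atTop i).mono
          (fun n hn => le_of_eq (tailzero _ hn hz))).frequently
      · -- odd coordinate
        obtain ⟨r, hr⟩ := hod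
        have hrk : r < kh - 1 := by omega
        have hrd : r < d := by omega
        refine freq_transfer (f := fun j => w j ⬝ᵥ g r) (i := i) ?_ (hfreq r hrk)
        intro j hj
        simp only [x]
        rw [if_neg (by omega)]
        have he : l.val / 2 = r := by omega
        have hfm : (⟨l.val / 2, by omega⟩ : Fin d) = ⟨r, hrd⟩ := Fin.ext (by simp [he])
        rw [hfm, hg j hj ⟨r, hrd⟩ (by simp; omega)]
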